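/- Let Ω ⊂ ℝⁿ be a bounded domain and let u be a stable solution of −Lu = f(u) in Ω, where f ∈ C¹(ℝ) and the coefficients of L are smooth on cl Ω. Then for every ξ ∈ C¹_c(Ω): ∫_Ω f′(u) ξ² dx ≤ ∫_Ω |∇ξ − (1/2) ξ A⁻¹(x) b̂(x)|²_{A(x)} dx, where b̂_i(x) := b_i(x) − Σ_k ∂_k a_{ki}(x). -/

import Mathlib

open MeasureTheory Metric Set Real

noncomputable section

/-- Euclidean space `ℝⁿ`. -/
abbrev En (n : ℕ) := EuclideanSpace ℝ (Fin n)

variable {n : ℕ}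

/-- Partial derivative `∂ᵢu(x)`. -/
def pd (i : Fin n) (u : En n → ℝ) (x : En n) : ℝ :=
  fderiv ℝ u x (EuclideanSpace.single i 1)

/-- Second partial derivative `∂²ᵢⱼu(x)`. -/
def pd2 (i j : Fin n) (u : En n → ℝ) (x : En n) : ℝ :=
  fderiv ℝ (fun y => pd j u y) x (EuclideanSpace.single i 1)

/-- Operator norm of the Hessian `D²u(x)`. -/
def hessNorm (u : En n → ℝ) (x : En n) : ℝ :=
  ‖fderiv ℝ (fderiv ℝ u) x‖

/-- Euclidean norm of the gradient `|∇u(x)|`. -/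
def gradNorm (u : En n → ℝ) (x : En n) : ℝ :=
  Real.sqrt (∑ i, (pd i u x) ^ 2)

/-- Radial derivative `u_r(x) = (x/|x|)·∇u(x)`. -/
def radDeriv (u : En n → ℝ) (x : En n) : ℝ :=
  (∑ i, x i * pd i u x) / ‖x‖

/-- Quadratic form `∑ᵢⱼ Mᵢⱼ vᵢ vⱼ`, i.e. the square `|v|_M²` of the weighted norm. -/
def wsq (M : Fin n → Fin n → ℝ) (v : Fin n → ℝ) : ℝ :=
  ∑ i, ∑ j, M i j * v i * v j

/-- The operator `Lu = ∑ aᵢⱼ(x) ∂²ᵢⱼu + ∑ bᵢ(x) ∂ᵢu`. -/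
def Lop (A : En n → Fin n → Fin n → ℝ) (b : En n → En n) (u : En n → ℝ) (x : En n) : ℝ :=
  (∑ i, ∑ j, A x i j * pd2 i j u x) + ∑ i, b x i * pd i u x

/-- Uniform ellipticity `λ ≤ A(x) ≤ Λ` on `s`. -/
def UnifElliptic (A : En n → Fin n → Fin n → ℝ) (lam Lam : ℝ) (s : Set (En n)) : Prop :=
  ∀ x ∈ s, ∀ p : En n, ‖p‖ = 1 →
    lam ≤ wsq (A x) (fun i => p i) ∧ wsq (A x) (fun i => p i) ≤ Lam

/-- Symmetry of the coefficient matrix on `s`. -/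
def SymmOn (A : En n → Fin n → Fin n → ℝ) (s : Set (En n)) : Prop :=
  ∀ x ∈ s, ∀ i j, A x i j = A x j i

/-- Smoothness of the data on the closed unit ball, plus symmetry of `A`. -/
def Setting (A : En n → Fin n → Fin n → ℝ) (b : En n → En n) (u : En n → ℝ) : Prop :=
  ContDiffOn ℝ (⊤ : ℕ∞) A (closedBall (0 : En n) 1) ∧
  ContDiffOn ℝ (⊤ : ℕ∞) b (closedBall (0 : En n) 1) ∧
  ContDiffOn ℝ (⊤ : ℕ∞) u (closedBall (0 : En n) 1) ∧
  SymmOn A (closedBall (0 : En n) 1)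

/-- `u` is a stable solution of `-Lu = f(u)` in `B₁`. -/
def IsStableSolution (A : En n → Fin n → Fin n → ℝ) (b : En n → En n)
    (f : ℝ → ℝ) (u : En n → ℝ) : Prop :=
  (∀ x ∈ ball (0 : En n) 1, -(Lop A b u x) = f (u x)) ∧
  ∃ φ : En n → ℝ,
    ContDiffOn ℝ 2 φ (ball (0 : En n) 1) ∧ ContinuousOn φ (closedBall (0 : En n) 1) ∧
    (∀ x ∈ ball (0 : En n) 1, 0 < φ x) ∧
    (∀ x ∈ sphere (0 : En n) 1, φ x = 0) ∧
    (∀ x ∈ ball (0 : En n) 1, deriv f (u x) * φ x ≤ -(Lop A b φ x))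

/-- `‖DA‖_{C⁰(cl B₁)}`. -/
def supDA (A : En n → Fin n → Fin n → ℝ) : ℝ :=
  ⨆ x ∈ closedBall (0 : En n) 1, ‖fderivWithin ℝ A (closedBall (0 : En n) 1) x‖

/-- `‖b‖_{C⁰(cl B₁)}`. -/
def supB (b : En n → En n) : ℝ :=
  ⨆ x ∈ closedBall (0 : En n) 1, ‖b x‖

/-- `‖A‖_{C¹(cl B₁)}`. -/
def normC1A (A : En n → Fin n → Fin n → ℝ) : ℝ :=
  ⨆ x ∈ closedBall (0 : En n) 1,
    (‖A x‖ + ‖fderivWithin ℝ A (closedBall (0 : En n) 1) x‖)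

/-- `b̂ᵢ(x) = bᵢ(x) − ∑ₖ ∂ₖa_{ki}(x)`, so that `Lu = div(A∇u) + b̂·∇u`. -/
def bhat (A : En n → Fin n → Fin n → ℝ) (b : En n → En n) (x : En n) : Fin n → ℝ :=
  fun i => b x i - ∑ k, pd k (fun y => A y k i) x

/-- `M⁻¹ v` for a square coefficient matrix `M`. -/
def invMulVec (M : Fin n → Fin n → ℝ) (v : Fin n → ℝ) : Fin n → ℝ :=
  ((Matrix.of M)⁻¹).mulVec v

/-- double sum bilinear form -/
def dsum (a : Fin n → Fin n → ℝ) (v z : Fin n → ℝ) : ℝ := ∑ i, ∑ j, a i j * v i * z j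

lemma wsq_eq_dsum (a : Fin n → Fin n → ℝ) (v : Fin n → ℝ) : wsq a v = dsum a v v := rfl

lemma dsum_symm {a : Fin n → Fin n → ℝ} (hsym : ∀ i j, a i j = a j i) (v z : Fin n → ℝ) :
    dsum a v z = dsum a z v := by
  rw [dsum, dsum, Finset.sum_comm]
  refine Finset.sum_congr rfl fun i _ => Finset.sum_congr rfl fun j _ => ?_
  rw [hsym i j]; ring

lemma wsq_expand (a : Fin n → Fin n → ℝ) (c1 c2 c3 : ℝ) (p q w : Fin n → ℝ) :
    wsq a (fun i => c1 * p i + c2 * q i + c3 * w i)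
      = c1^2 * wsq a p + c2^2 * wsq a q + c3^2 * wsq a w
        + c1*c2*(dsum a p q + dsum a q p) + c1*c3*(dsum a p w + dsum a w p)
        + c2*c3*(dsum a q w + dsum a w q) := by
  simp only [wsq, dsum, Finset.mul_sum, ← Finset.sum_add_distrib]
  refine Finset.sum_congr rfl fun i _ => Finset.sum_congr rfl fun j _ => ?_
  ring

lemma wsq_smul (a : Fin n → Fin n → ℝ) (c : ℝ) (v : Fin n → ℝ) :
    wsq a (fun i => c * v i) = c^2 * wsq a v := by
  simp only [wsq, Finset.mul_sum]
  refine Finset.sum_congr rfl fun i _ => Finset.sum_congr rfl fun j _ => ?_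
  ring

lemma wsq_lower {lam : ℝ} (hlam : 0 < lam) {a : Fin n → Fin n → ℝ}
    (h : ∀ p : En n, ‖p‖ = 1 → lam ≤ wsq a (fun i => p i)) (v : Fin n → ℝ) :
    lam * (∑ i, v i ^ 2) ≤ wsq a v := by
  set S := ∑ i, v i ^ 2 with hS
  have hS0 : 0 ≤ S := Finset.sum_nonneg fun i _ => sq_nonneg _
  rcases eq_or_lt_of_le hS0 with hS' | hS'
  · have hv : ∀ i, v i = 0 := by
      intro i
      have := (Finset.sum_eq_zero_iff_of_nonneg (fun i _ => sq_nonneg (v i))).1 hS'.symm i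
        (Finset.mem_univ i)
      exact pow_eq_zero_iff (two_ne_zero) |>.1 this
    have : wsq a v = 0 := by
      rw [wsq]
      refine Finset.sum_eq_zero fun i _ => Finset.sum_eq_zero fun j _ => ?_
      rw [hv i]; ring
    rw [this, ← hS']; simp
  · set c := Real.sqrt S with hc
    have hcpos : 0 < c := Real.sqrt_pos.2 hS'
    have hc2 : c ^ 2 = S := Real.sq_sqrt hS0
    set p : En n := (WithLp.equiv 2 (Fin n → ℝ)).symm (fun i => c⁻¹ * v i) with hp
    have hpi : ∀ i, p i = c⁻¹ * v i := fun i => rfl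
    have hnorm : ‖p‖ = 1 := by
      rw [EuclideanSpace.norm_eq]
      have : ∑ i, ‖p i‖ ^ 2 = 1 := by
        simp only [hpi, Real.norm_eq_abs, sq_abs]
        have : ∑ i, (c⁻¹ * v i) ^ 2 = c⁻¹ ^ 2 * S := by
          rw [hS, Finset.mul_sum]
          exact Finset.sum_congr rfl fun i _ => by ring
        rw [this, ← hc2]
        field_simp
      rw [this, Real.sqrt_one]
    have h1 := h p hnorm
    have h2 : wsq a (fun i => p i) = c⁻¹ ^ 2 * wsq a v := by
      have : (fun i => p i) = fun i => c⁻¹ * v i := funext hpi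
      rw [this, wsq_smul]
    rw [h2] at h1
    have := mul_le_mul_of_nonneg_right h1 (le_of_lt (by positivity : (0:ℝ) < c ^ 2))
    calc lam * S = lam * c ^ 2 := by rw [hc2]
      _ ≤ c⁻¹ ^ 2 * wsq a v * c ^ 2 := by linarith [this]
      _ = wsq a v := by field_simp

lemma wsq_nonneg {lam : ℝ} (hlam : 0 < lam) {a : Fin n → Fin n → ℝ}
    (h : ∀ p : En n, ‖p‖ = 1 → lam ≤ wsq a (fun i => p i)) (v : Fin n → ℝ) :
    0 ≤ wsq a v :=
  le_trans (by positivity) (wsq_lower hlam h v)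

/-- IBP: integral of a partial derivative of a compactly supported C¹ function vanishes. -/
lemma integral_fderiv_apply_eq_zero {g : En n → ℝ} (hg : ContDiff ℝ 1 g)
    (hgc : HasCompactSupport g) (v : En n) : ∫ x, fderiv ℝ g x v = 0 := by
  have hcont : Continuous fun x => fderiv ℝ g x v :=
    (hg.continuous_fderiv one_ne_zero).clm_apply continuous_const
  have hcs : HasCompactSupport fun x => fderiv ℝ g x v := by
    apply HasCompactSupport.intro (hgc.fderiv ℝ)
    intro x hx
    have : fderiv ℝ g x = 0 := image_eq_zero_of_notMem_tsupport hx
    simp [this]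
  have hint : Integrable (fun x => fderiv ℝ g x v) (volume : Measure (En n)) :=
    hcont.integrable_of_hasCompactSupport hcs
  have h := integral_mul_fderiv_eq_neg_fderiv_mul_of_integrable (μ := (volume : Measure (En n)))
    (f := g) (g := fun _ => (1:ℝ)) (v := v)
    (by simpa using hint) (by simp) (by simpa using hg.continuous.integrable_of_hasCompactSupport hgc)
    (fun x _ => hg.differentiable one_ne_zero x) (fun x _ => differentiable_const 1 x)
  simp only [fderiv_fun_const] at h
  simpa using h.symm

/-- A function continuous on an open set `Ω`, vanishing outside a compact `K ⊆ Ω`,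
is integrable. -/
lemma integrable_of_vanish {Ω K : Set (En n)} (hΩopen : IsOpen Ω) (hK : IsCompact K)
    (hKΩ : K ⊆ Ω) {h : En n → ℝ} (hc : ContinuousOn h Ω) (hz : ∀ x, x ∉ K → h x = 0) :
    Integrable h (volume : Measure (En n)) := by
  have heq : h = K.indicator h := by
    funext x
    by_cases hx : x ∈ K
    · rw [Set.indicator_of_mem hx]
    · rw [Set.indicator_of_notMem hx, hz x hx]
  rw [heq, integrable_indicator_iff hK.measurableSet]
  exact (hc.mono hKΩ).integrableOn_compact hK

lemma integrableOn_of_vanish {Ω K : Set (En n)} (hΩopen : IsOpen Ω) (hK : IsCompact K)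
    (hKΩ : K ⊆ Ω) {h : En n → ℝ} (hc : ContinuousOn h Ω) (hz : ∀ x, x ∉ K → h x = 0) :
    IntegrableOn h Ω (volume : Measure (En n)) :=
  (integrable_of_vanish hΩopen hK hKΩ hc hz).integrableOn

lemma setIntegral_eq_of_vanish {Ω K : Set (En n)} (hKΩ : K ⊆ Ω) {h : En n → ℝ}
    (hz : ∀ x, x ∉ K → h x = 0) :
    ∫ x in Ω, h x = ∫ x, h x := by
  apply setIntegral_eq_integral_of_forall_compl_eq_zero
  intro x hx
  exact hz x (fun hK => hx (hKΩ hK))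

/-- A symmetric matrix whose quadratic form dominates `lam * |v|²` is positive definite,
and `A * A⁻¹ = 1`. -/
lemma matrix_inv_fact {lam : ℝ} (hlam : 0 < lam) {a : Fin n → Fin n → ℝ}
    (hsym : ∀ i j, a i j = a j i)
    (hlow : ∀ v : Fin n → ℝ, lam * (∑ i, v i ^ 2) ≤ wsq a v) :
    (Matrix.of a) * (Matrix.of a)⁻¹ = 1 := by
  apply Matrix.mul_nonsing_inv
  apply isUnit_iff_ne_zero.2
  have hpd : (Matrix.of a).PosDef := by
    rw [Matrix.posDef_iff_dotProduct_mulVec]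
    constructor
    · ext i j
      simp [Matrix.conjTranspose_apply, hsym i j]
    · intro v hv
      have hv' : 0 < ∑ i, v i ^ 2 := by
        rcases Function.ne_iff.1 hv with ⟨i, hi⟩
        have : 0 < v i ^ 2 := pow_two_pos_of_ne_zero hi
        exact Finset.sum_pos' (fun j _ => sq_nonneg _) ⟨i, Finset.mem_univ i, this⟩
      have h1 : 0 < wsq a v := lt_of_lt_of_le (mul_pos hlam hv') (hlow v)
      have h2 : dotProduct (star v) ((Matrix.of a).mulVec v) = wsq a v := by
        simp only [dotProduct, Matrix.mulVec, Matrix.of_apply, star_trivial,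
          Pi.star_apply, wsq, Finset.mul_sum]
        exact Finset.sum_congr rfl fun i _ => Finset.sum_congr rfl fun j _ => by ring
      rw [h2]; exact h1
  exact ne_of_gt hpd.det_pos

/-- Components of `A * (A⁻¹ v) = v`. -/
lemma mulVec_inv_fact {a : Fin n → Fin n → ℝ} (hinv : (Matrix.of a) * (Matrix.of a)⁻¹ = 1)
    (v : Fin n → ℝ) (i : Fin n) :
    v i = ∑ j, a i j * ((Matrix.of a)⁻¹.mulVec v) j := by
  have : (Matrix.of a).mulVec ((Matrix.of a)⁻¹.mulVec v) = v := by
    rw [Matrix.mulVec_mulVec, hinv, Matrix.one_mulVec]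
  conv_lhs => rw [← this]
  simp [Matrix.mulVec, dotProduct]


lemma pd_eventually_zero {g : En n → ℝ} {x : En n} (h : ∀ᶠ y in nhds x, g y = 0) (i : Fin n) :
    pd i g x = 0 := by
  have h' : g =ᶠ[nhds x] (fun _ => (0:ℝ)) := h
  rw [pd, h'.fderiv_eq, fderiv_fun_const]
  simp

lemma pd_mul {g h : En n → ℝ} {x : En n} (hg : DifferentiableAt ℝ g x)
    (hh : DifferentiableAt ℝ h x) (i : Fin n) :
    pd i (fun y => g y * h y) x = pd i g x * h x + g x * pd i h x := by
  simp only [pd]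
  rw [fderiv_fun_mul hg hh]
  simp only [ContinuousLinearMap.add_apply, ContinuousLinearMap.smul_apply, smul_eq_mul]
  ring

lemma pd_sum {m : ℕ} {g : Fin m → En n → ℝ} {x : En n}
    (hg : ∀ j, DifferentiableAt ℝ (g j) x) (i : Fin n) :
    pd i (fun y => ∑ j, g j y) x = ∑ j, pd i (g j) x := by
  simp only [pd]
  rw [fderiv_fun_sum (fun j _ => hg j)]
  simp

lemma pd_div {g h : En n → ℝ} {x : En n} (hg : DifferentiableAt ℝ g x)
    (hh : DifferentiableAt ℝ h x) (h0 : h x ≠ 0) (i : Fin n) :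
    pd i (fun y => g y / h y) x = (pd i g x * h x - g x * pd i h x) / h x ^ 2 := by
  have hinv : HasFDerivAt (fun y => (h y)⁻¹) ((-(h x ^ 2)⁻¹) • fderiv ℝ h x) x :=
    (hasDerivAt_inv h0).comp_hasFDerivAt x hh.hasFDerivAt
  have hmul := hg.hasFDerivAt.mul' hinv
  rw [show (fun y => g y / h y) = fun y => g y * (h y)⁻¹ from funext fun y => div_eq_mul_inv _ _]
  rw [pd, show (fun y => g y * (h y)⁻¹) = (g * fun y => (h y)⁻¹) from rfl, hmul.fderiv]
  simp only [ContinuousLinearMap.add_apply, ContinuousLinearMap.smul_apply,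
    ContinuousLinearMap.smulRight_apply, smul_eq_mul, op_smul_eq_mul, pd]
  field_simp
  ring

lemma pd_sq {g : En n → ℝ} {x : En n} (hg : DifferentiableAt ℝ g x) (i : Fin n) :
    pd i (fun y => g y ^ 2) x = 2 * g x * pd i g x := by
  have : (fun y => g y ^ 2) = fun y => g y * g y := by funext y; ring
  rw [this, pd_mul hg hg]
  ring


lemma key3_algebra {a : Fin n → Fin n → ℝ} (hsym : ∀ i j, a i j = a j i)
    (hnn : ∀ v : Fin n → ℝ, 0 ≤ wsq a v)
    {p q w bh : Fin n → ℝ} {s t : ℝ} (ht : 0 < t)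
    (hbw : ∀ i, bh i = ∑ j, a i j * w j) :
    (∑ i, (∑ j, a i j * q j) * ((2 * s * p i * t - s ^ 2 * q i) / t ^ 2))
      - (∑ i, bh i * q i) * (s ^ 2 / t)
      ≤ wsq a (fun i => p i - 1 / 2 * s * w i) := by
  have ht' : t ≠ 0 := ne_of_gt ht
  have ht2 : (0:ℝ) < t ^ 2 := by positivity
  have h1 : ∑ i, (∑ j, a i j * q j) * ((2 * s * p i * t - s ^ 2 * q i) / t ^ 2)
      = (2 * s / t) * dsum a p q - (s ^ 2 / t ^ 2) * dsum a q q := by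
    rw [dsum, dsum, Finset.mul_sum, Finset.mul_sum, ← Finset.sum_sub_distrib]
    refine Finset.sum_congr rfl fun i _ => ?_
    rw [Finset.sum_mul, Finset.mul_sum, Finset.mul_sum, ← Finset.sum_sub_distrib]
    refine Finset.sum_congr rfl fun j _ => ?_
    field_simp
  have h2 : ∑ i, bh i * q i = dsum a q w := by
    rw [dsum]
    refine Finset.sum_congr rfl fun i _ => ?_
    rw [hbw i, Finset.sum_mul]
    exact Finset.sum_congr rfl fun j _ => by ring
  have e5 : wsq a (fun i => p i - 1 / 2 * s * w i)
      = wsq a p + 1 / 4 * s ^ 2 * wsq a w - s * dsum a p w := by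
    have hX : (fun i => p i - 1 / 2 * s * w i)
        = fun i => (1:ℝ) * p i + 0 * q i + (-(1 / 2 * s)) * w i := by
      funext i; ring
    rw [hX, wsq_expand, dsum_symm hsym w p, wsq_eq_dsum, wsq_eq_dsum, wsq_eq_dsum]
    ring
  have e6 : wsq a (fun i => t * p i + (-s) * q i + (-(t * s / 2)) * w i)
      = t ^ 2 * wsq a p + s ^ 2 * wsq a q + t ^ 2 * s ^ 2 / 4 * wsq a w
        - 2 * t * s * dsum a p q - t ^ 2 * s * dsum a p w + t * s ^ 2 * dsum a q w := by
    rw [wsq_expand, dsum_symm hsym q p, dsum_symm hsym w p, dsum_symm hsym w q,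
      wsq_eq_dsum, wsq_eq_dsum, wsq_eq_dsum]
    ring
  have h0 := hnn (fun i => t * p i + (-s) * q i + (-(t * s / 2)) * w i)
  rw [e6] at h0
  have hq : dsum a q q = wsq a q := (wsq_eq_dsum a q).symm
  have hmul : t ^ 2 * ((∑ i, (∑ j, a i j * q j) * ((2 * s * p i * t - s ^ 2 * q i) / t ^ 2))
      - (∑ i, bh i * q i) * (s ^ 2 / t))
      = 2 * t * s * dsum a p q - s ^ 2 * wsq a q - t * s ^ 2 * dsum a q w := by
    rw [h1, h2, hq]
    field_simp
  have hfin : t ^ 2 * ((∑ i, (∑ j, a i j * q j) * ((2 * s * p i * t - s ^ 2 * q i) / t ^ 2))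
      - (∑ i, bh i * q i) * (s ^ 2 / t))
      ≤ t ^ 2 * wsq a (fun i => p i - 1 / 2 * s * w i) := by
    rw [hmul, e5]
    nlinarith [h0]
  exact le_of_mul_le_mul_left hfin ht2

/-- inequality (1.8): the integral stability inequality
`∫ f'(u) ξ² ≤ ∫ |∇ξ − ½ ξ A⁻¹ b̂|²_{A(x)}` on a bounded domain `Ω`. -/
theorem stmt_8 (n : ℕ) (lam Lam : ℝ) (hlam : 0 < lam) (hlL : lam ≤ Lam)
    (Ω : Set (En n)) (hΩopen : IsOpen Ω) (hΩconn : IsConnected Ω)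
    (hΩbdd : Bornology.IsBounded Ω)
    (A : En n → Fin n → Fin n → ℝ) (b : En n → En n) (f : ℝ → ℝ) (u : En n → ℝ)
    (hA : ContDiffOn ℝ (⊤ : ℕ∞) A (closure Ω))
    (hb : ContDiffOn ℝ (⊤ : ℕ∞) b (closure Ω))
    (hu : ContDiffOn ℝ (⊤ : ℕ∞) u (closure Ω))
    (hsym : ∀ x ∈ closure Ω, ∀ i j, A x i j = A x j i)
    (hell : ∀ x ∈ Ω, ∀ p : En n, ‖p‖ = 1 →
      lam ≤ wsq (A x) (fun i => p i) ∧ wsq (A x) (fun i => p i) ≤ Lam)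
    (hf : ContDiff ℝ 1 f)
    (heq : ∀ x ∈ Ω, -(Lop A b u x) = f (u x))
    (hstable : ∃ φ : En n → ℝ, ContDiffOn ℝ 2 φ Ω ∧ ContinuousOn φ (closure Ω) ∧
      (∀ x ∈ Ω, 0 < φ x) ∧ (∀ x ∈ frontier Ω, φ x = 0) ∧
      (∀ x ∈ Ω, deriv f (u x) * φ x ≤ -(Lop A b φ x)))
    (ξ : En n → ℝ) (hξ : ContDiff ℝ 1 ξ) (hξc : HasCompactSupport ξ)
    (hξΩ : tsupport ξ ⊆ Ω) :
    ∫ x in Ω, deriv f (u x) * ξ x ^ 2 ≤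
      ∫ x in Ω, wsq (A x)
        (fun i => pd i ξ x - 1 / 2 * ξ x * invMulVec (A x) (bhat A b x) i) := by
  classical
  obtain ⟨φ, hφ2, hφcont, hφpos, hφ0, hφstab⟩ := hstable
  set K := tsupport ξ with hKdef
  have hKc : IsCompact K := hξc
  have hKΩ : K ⊆ Ω := hξΩ
  have hKcl : IsClosed K := isClosed_tsupport ξ
  have hξz : ∀ x, x ∉ K → ξ x = 0 := fun x hx => image_eq_zero_of_notMem_tsupport hx
  have hΩm : MeasurableSet Ω := hΩopen.measurableSet
  have hmem : ∀ x ∈ Ω, Ω ∈ nhds x := fun x hx => hΩopen.mem_nhds hx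
  -- abbreviations
  set η : En n → ℝ := fun x => ξ x ^ 2 / φ x with hηdef
  set F : Fin n → En n → ℝ := fun i x => ∑ j, A x i j * pd j φ x with hFdef
  set G : Fin n → En n → ℝ := fun i x => F i x * η x with hGdef
  -- smoothness on Ω
  have hAΩ : ContDiffOn ℝ (⊤ : ℕ∞) A Ω := hA.mono subset_closure
  have hbΩ : ContDiffOn ℝ (⊤ : ℕ∞) b Ω := hb.mono subset_closure
  have huΩ : ContDiffOn ℝ (⊤ : ℕ∞) u Ω := hu.mono subset_closure
  have hAij : ∀ i j, ContDiffOn ℝ (⊤ : ℕ∞) (fun y => A y i j) Ω := fun i j =>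
    contDiffOn_pi.1 (contDiffOn_pi.1 hAΩ i) j
  have hbi : ∀ i, ContDiffOn ℝ (⊤ : ℕ∞) (fun y => b y i) Ω := fun i =>
    (EuclideanSpace.proj (𝕜 := ℝ) i).contDiff.comp_contDiffOn hbΩ
  have hpdφ : ∀ j, ContDiffOn ℝ 1 (pd j φ) Ω := by
    intro j
    exact ContDiffOn.clm_apply (hφ2.fderiv_of_isOpen (m := 1) hΩopen (by norm_num)) contDiffOn_const
  have hpdAij : ∀ i j k, ContDiffOn ℝ 1 (pd k (fun y => A y i j)) Ω := by
    intro i j k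
    exact ContDiffOn.clm_apply ((hAij i j).fderiv_of_isOpen (m := 1) hΩopen (by decide)) contDiffOn_const
  have hFi : ∀ i, ContDiffOn ℝ 1 (F i) Ω := by
    intro i
    apply ContDiffOn.sum
    intro j _
    exact ((hAij i j).of_le (by decide)).mul (hpdφ j)
  have hφne : ∀ x ∈ Ω, φ x ≠ 0 := fun x hx => ne_of_gt (hφpos x hx)
  have hηΩ : ContDiffOn ℝ 1 η Ω := by
    apply ContDiffOn.div
    · exact (hξ.pow 2).contDiffOn
    · exact hφ2.of_le (by norm_num)
    · exact hφne
  -- continuity facts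
  have hpdξc : ∀ i, Continuous (pd i ξ) := fun i =>
    (hξ.continuous_fderiv one_ne_zero).clm_apply continuous_const
  have hcpdη : ∀ i, ContinuousOn (pd i η) Ω := fun i =>
    (ContDiffOn.clm_apply (hηΩ.fderiv_of_isOpen (m := 0) hΩopen (by norm_num)) contDiffOn_const).continuousOn
  have hcpdFi : ∀ i, ContinuousOn (pd i (F i)) Ω := fun i =>
    (ContDiffOn.clm_apply ((hFi i).fderiv_of_isOpen (m := 0) hΩopen (by norm_num)) contDiffOn_const).continuousOn
  have hcpd2 : ∀ i j, ContinuousOn (pd2 i j φ) Ω := fun i j =>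
    (ContDiffOn.clm_apply ((hpdφ j).fderiv_of_isOpen (m := 0) hΩopen (by norm_num)) contDiffOn_const).continuousOn
  have hcbhat : ∀ i, ContinuousOn (fun x => bhat A b x i) Ω := by
    intro i
    apply ContinuousOn.sub ((hbi i).continuousOn)
    exact continuousOn_finset_sum _ fun k _ => (hpdAij k i k).continuousOn
  -- ellipticity consequences
  have hlow : ∀ x ∈ Ω, ∀ v : Fin n → ℝ, lam * (∑ i, v i ^ 2) ≤ wsq (A x) v := by
    intro x hx v
    exact wsq_lower hlam (fun p hp => (hell x hx p hp).1) v
  have hwnn : ∀ x ∈ Ω, ∀ v : Fin n → ℝ, 0 ≤ wsq (A x) v := fun x hx v =>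
    le_trans (by positivity) (hlow x hx v)
  have hinvA : ∀ x ∈ Ω, (Matrix.of (A x)) * (Matrix.of (A x))⁻¹ = 1 := fun x hx =>
    matrix_inv_fact hlam (fun i j => hsym x (subset_closure hx) i j) (hlow x hx)
  have hbw : ∀ x ∈ Ω, ∀ i, bhat A b x i =
      ∑ j, A x i j * invMulVec (A x) (bhat A b x) j := by
    intro x hx i
    exact mulVec_inv_fact (hinvA x hx) (bhat A b x) i
  -- continuity of W
  have hdet : ∀ x ∈ Ω, (Matrix.of (A x)).det ≠ 0 := by
    intro x hx h
    have h2 := congrArg Matrix.det (hinvA x hx)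
    rw [Matrix.det_mul, h, zero_mul, Matrix.det_one] at h2
    exact zero_ne_one h2
  have hinvAt : ∀ x ∈ Ω, ContinuousAt (fun y => (Matrix.of (A y))⁻¹) x := by
    intro x hx
    have hMA : ContinuousAt (fun y => Matrix.of (A y)) x :=
      (hAΩ.contDiffAt (hmem x hx)).continuousAt
    have hRinv : ContinuousAt Ring.inverse ((Matrix.of (A x)).det) := by
      rw [Ring.inverse_eq_inv']
      exact continuousAt_inv₀ (hdet x hx)
    exact ContinuousAt.comp (continuousAt_matrix_inv _ hRinv) hMA
  have hcW : ∀ i, ContinuousOn (fun x => invMulVec (A x) (bhat A b x) i) Ω := by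
    intro i
    have hfun : (fun y => invMulVec (A y) (bhat A b y) i)
        = fun y => ∑ j, ((Matrix.of (A y))⁻¹ i j) * bhat A b y j := by
      funext y
      simp [invMulVec, Matrix.mulVec, dotProduct]
    rw [hfun]
    apply continuousOn_finset_sum
    intro j _
    apply ContinuousOn.mul _ (hcbhat j)
    intro x hx
    exact (((continuous_apply j).comp (continuous_apply i)).continuousAt.comp
      (hinvAt x hx)).continuousWithinAt
  -- continuity of I4 integrand
  have hcI4 : ContinuousOn (fun x => wsq (A x)
      (fun i => pd i ξ x - 1 / 2 * ξ x * invMulVec (A x) (bhat A b x) i)) Ω := by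
    apply continuousOn_finset_sum
    intro i _
    apply continuousOn_finset_sum
    intro j _
    apply ContinuousOn.mul
    apply ContinuousOn.mul ((hAij i j).continuousOn)
    · exact ((hpdξc i).continuousOn).sub ((continuousOn_const.mul (hξ.continuous.continuousOn)).mul (hcW i))
    · exact ((hpdξc j).continuousOn).sub ((continuousOn_const.mul (hξ.continuous.continuousOn)).mul (hcW j))
  -- vanishing off K
  have hηz : ∀ x, x ∉ K → η x = 0 := by
    intro x hx
    simp only [hηdef, hξz x hx]
    norm_num
  have hnbz : ∀ x, x ∉ K → ∀ᶠ y in nhds x, ξ y = 0 := by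
    intro x hx
    filter_upwards [hKcl.isOpen_compl.mem_nhds hx] with y hy
    exact hξz y hy
  have hpdξz : ∀ x, x ∉ K → ∀ i, pd i ξ x = 0 := by
    intro x hx i
    exact pd_eventually_zero (hnbz x hx) i
  have hpdηz : ∀ x, x ∉ K → ∀ i, pd i η x = 0 := by
    intro x hx i
    apply pd_eventually_zero _ i
    filter_upwards [hnbz x hx] with y hy
    simp only [hηdef, hy]
    norm_num
  have hηGz : ∀ i x, x ∉ K → G i x = 0 := by
    intro i x hx
    simp only [hGdef, hηz x hx, mul_zero]
  -- differentiability at points of Ω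
  have hφd : ∀ x ∈ Ω, DifferentiableAt ℝ φ x := fun x hx =>
    (hφ2.contDiffAt (hmem x hx)).differentiableAt (by norm_num)
  have hpdφd : ∀ j x, x ∈ Ω → DifferentiableAt ℝ (pd j φ) x := fun j x hx =>
    ((hpdφ j).contDiffAt (hmem x hx)).differentiableAt one_ne_zero
  have hAd : ∀ i j x, x ∈ Ω → DifferentiableAt ℝ (fun y => A y i j) x := fun i j x hx =>
    ((hAij i j).contDiffAt (hmem x hx)).differentiableAt (by decide)
  have hFd : ∀ i x, x ∈ Ω → DifferentiableAt ℝ (F i) x := fun i x hx =>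
    ((hFi i).contDiffAt (hmem x hx)).differentiableAt one_ne_zero
  have hηd : ∀ x ∈ Ω, DifferentiableAt ℝ η x := fun x hx =>
    (hηΩ.contDiffAt (hmem x hx)).differentiableAt one_ne_zero
  -- quotient rule for η on Ω
  have hpdη : ∀ x ∈ Ω, ∀ i, pd i η x =
      (2 * ξ x * pd i ξ x * φ x - ξ x ^ 2 * pd i φ x) / φ x ^ 2 := by
    intro x hx i
    have := pd_div (g := fun y => ξ y ^ 2) (h := φ) (x := x)
      ((hξ.pow 2).contDiffAt.differentiableAt one_ne_zero) (hφd x hx) (hφne x hx) i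
    rw [hηdef]
    rw [this, pd_sq (hξ.contDiffAt.differentiableAt one_ne_zero) i]
  -- G i is C¹ with compact support
  have hGc1 : ∀ i, ContDiff ℝ 1 (G i) := by
    intro i
    rw [contDiff_iff_contDiffAt]
    intro x
    by_cases hx : x ∈ Ω
    · exact (((hFi i).mul hηΩ).contDiffAt (hmem x hx))
    · have hx' : x ∉ K := fun h => hx (hKΩ h)
      apply ContDiffAt.congr_of_eventuallyEq (contDiffAt_const (c := (0:ℝ)))
      filter_upwards [hKcl.isOpen_compl.mem_nhds hx'] with y hy
      exact hηGz i y hy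
  have hGcs : ∀ i, HasCompactSupport (G i) := fun i =>
    HasCompactSupport.intro hKc (hηGz i)
  -- product rule for G everywhere
  have hGder : ∀ i x, pd i (G i) x = pd i (F i) x * η x + F i x * pd i η x := by
    intro i x
    by_cases hx : x ∈ Ω
    · exact pd_mul (hFd i x hx) (hηd x hx) i
    · have hx' : x ∉ K := fun h => hx (hKΩ h)
      have h1 : pd i (G i) x = 0 := by
        apply pd_eventually_zero _ i
        filter_upwards [hKcl.isOpen_compl.mem_nhds hx'] with y hy
        exact hηGz i y hy
      rw [h1, hηz x hx', hpdηz x hx' i, mul_zero, mul_zero, add_zero]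
  -- divergence identity on Ω
  have hdiv : ∀ x ∈ Ω, Lop A b φ x =
      (∑ i, pd i (F i) x) + ∑ i, bhat A b x i * pd i φ x := by
    intro x hx
    have hpdF : ∀ i, pd i (F i) x =
        ∑ j, (pd i (fun y => A y i j) x * pd j φ x + A x i j * pd2 i j φ x) := by
      intro i
      simp only [hFdef]
      rw [pd_sum (g := fun j y => A y i j * pd j φ y) (fun j => (hAd i j x hx).mul (hpdφd j x hx)) i]
      refine Finset.sum_congr rfl fun j _ => ?_
      rw [pd_mul (hAd i j x hx) (hpdφd j x hx) i]
      rfl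
    have hswap : (∑ i, ∑ j, pd i (fun y => A y i j) x * pd j φ x)
        = ∑ i, (∑ k, pd k (fun y => A y k i) x) * pd i φ x := by
      rw [Finset.sum_comm]
      exact Finset.sum_congr rfl fun i _ => (Finset.sum_mul _ _ _).symm
    simp only [Lop, hpdF, bhat, Finset.sum_add_distrib, sub_mul, Finset.sum_sub_distrib]
    rw [hswap]
    ring
  -- step 1 : stability pointwise
  have key1 : ∀ x ∈ Ω, deriv f (u x) * ξ x ^ 2 ≤ (-(Lop A b φ x)) * η x := by
    intro x hx
    have hηnn : 0 ≤ η x := div_nonneg (sq_nonneg _) (hφpos x hx).le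
    have hc : φ x * η x = ξ x ^ 2 := by
      simp only [hηdef]
      rw [mul_comm, div_mul_cancel₀ _ (hφne x hx)]
    have : deriv f (u x) * ξ x ^ 2 = (deriv f (u x) * φ x) * η x := by
      rw [mul_assoc, hc]
    rw [this]
    exact mul_le_mul_of_nonneg_right (hφstab x hx) hηnn
  -- step 3 : pointwise algebraic inequality
  have key3 : ∀ x ∈ Ω, (∑ i, F i x * pd i η x) - (∑ i, bhat A b x i * pd i φ x) * η x ≤
      wsq (A x) (fun i => pd i ξ x - 1 / 2 * ξ x * invMulVec (A x) (bhat A b x) i) := by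
    intro x hx
    have halg := key3_algebra (hsym x (subset_closure hx)) (hwnn x hx)
      (p := fun i => pd i ξ x) (q := fun i => pd i φ x)
      (w := fun i => invMulVec (A x) (bhat A b x) i) (bh := fun i => bhat A b x i)
      (s := ξ x) (t := φ x) (hφpos x hx) (hbw x hx)
    simp only [hηdef, hFdef]
    simp only [hηdef] at hpdη
    simp only [hpdη x hx]
    simpa using halg
  -- integrability
  have hI1 : IntegrableOn (fun x => deriv f (u x) * ξ x ^ 2) Ω := by
    apply integrableOn_of_vanish hΩopen hKc hKΩ
    · exact (((hf.continuous_deriv le_rfl).comp_continuousOn (huΩ.continuousOn)).mul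
        ((hξ.continuous.pow 2).continuousOn))
    · intro x hx
      rw [hξz x hx]
      ring
  have hI2 : IntegrableOn (fun x => (-(Lop A b φ x)) * η x) Ω := by
    apply integrableOn_of_vanish hΩopen hKc hKΩ
    · apply ContinuousOn.mul _ (hηΩ.continuousOn)
      apply ContinuousOn.neg
      apply ContinuousOn.add
      · exact continuousOn_finset_sum _ fun i _ => continuousOn_finset_sum _ fun j _ =>
          ((hAij i j).continuousOn).mul (hcpd2 i j)
      · exact continuousOn_finset_sum _ fun i _ => ((hbi i).continuousOn).mul ((hpdφ i).continuousOn)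
    · intro x hx
      rw [hηz x hx, mul_zero]
  have hI3a : ∀ i, IntegrableOn (fun x => pd i (F i) x * η x) Ω := by
    intro i
    apply integrableOn_of_vanish hΩopen hKc hKΩ
    · exact (hcpdFi i).mul (hηΩ.continuousOn)
    · intro x hx
      rw [hηz x hx, mul_zero]
  have hI3b : ∀ i, IntegrableOn (fun x => F i x * pd i η x) Ω := by
    intro i
    apply integrableOn_of_vanish hΩopen hKc hKΩ
    · exact ((hFi i).continuousOn).mul (hcpdη i)
    · intro x hx
      rw [hpdηz x hx i, mul_zero]
  have hI3 : IntegrableOn (fun x => (∑ i, F i x * pd i η x)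
      - (∑ i, bhat A b x i * pd i φ x) * η x) Ω := by
    apply integrableOn_of_vanish hΩopen hKc hKΩ
    · apply ContinuousOn.sub
      · exact continuousOn_finset_sum _ fun i _ => ((hFi i).continuousOn).mul (hcpdη i)
      · exact ContinuousOn.mul (continuousOn_finset_sum _ fun i _ =>
          (hcbhat i).mul ((hpdφ i).continuousOn)) (hηΩ.continuousOn)
    · intro x hx
      rw [hηz x hx, mul_zero]
      simp only [hpdηz x hx, mul_zero]
      simp
  have hI4 : IntegrableOn (fun x => wsq (A x)
      (fun i => pd i ξ x - 1 / 2 * ξ x * invMulVec (A x) (bhat A b x) i)) Ω := by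
    apply integrableOn_of_vanish hΩopen hKc hKΩ hcI4
    intro x hx
    have : (fun i => pd i ξ x - 1 / 2 * ξ x * invMulVec (A x) (bhat A b x) i)
        = fun _ => (0:ℝ) := by
      funext i
      rw [hpdξz x hx i, hξz x hx]
      ring
    rw [this, wsq]
    simp
  -- step 2 : integration by parts
  have hibp : ∀ i, ∫ x in Ω, pd i (F i) x * η x = - ∫ x in Ω, F i x * pd i η x := by
    intro i
    have hzero : ∫ x, pd i (G i) x = 0 := by
      have := integral_fderiv_apply_eq_zero (hGc1 i) (hGcs i) (EuclideanSpace.single i 1)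
      simpa [pd] using this
    have hsplit : ∫ x, pd i (G i) x = (∫ x, pd i (F i) x * η x) + ∫ x, F i x * pd i η x := by
      rw [← integral_add]
      · exact integral_congr_ae (Filter.Eventually.of_forall fun x => hGder i x)
      · exact integrable_of_vanish hΩopen hKc hKΩ ((hcpdFi i).mul (hηΩ.continuousOn))
          (fun x hx => by rw [hηz x hx, mul_zero])
      · exact integrable_of_vanish hΩopen hKc hKΩ (((hFi i).continuousOn).mul (hcpdη i))
          (fun x hx => by rw [hpdηz x hx i, mul_zero])
    have e1 : ∫ x in Ω, pd i (F i) x * η x = ∫ x, pd i (F i) x * η x :=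
      setIntegral_eq_of_vanish hKΩ (fun x hx => by rw [hηz x hx, mul_zero])
    have e2 : ∫ x in Ω, F i x * pd i η x = ∫ x, F i x * pd i η x :=
      setIntegral_eq_of_vanish hKΩ (fun x hx => by rw [hpdηz x hx i, mul_zero])
    rw [e1, e2]
    linarith [hzero, hsplit]
  have hI3c : IntegrableOn (fun x => (∑ i, bhat A b x i * pd i φ x) * η x) Ω := by
    apply integrableOn_of_vanish hΩopen hKc hKΩ
    · exact ContinuousOn.mul (continuousOn_finset_sum _ fun i _ =>
        (hcbhat i).mul ((hpdφ i).continuousOn)) (hηΩ.continuousOn)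
    · intro x hx
      rw [hηz x hx, mul_zero]
  have key2 : ∫ x in Ω, (-(Lop A b φ x)) * η x = ∫ x in Ω, ((∑ i, F i x * pd i η x)
      - (∑ i, bhat A b x i * pd i φ x) * η x) := by
    calc ∫ x in Ω, (-(Lop A b φ x)) * η x
        = ∫ x in Ω, ((∑ i, -(pd i (F i) x * η x))
            - (∑ i, bhat A b x i * pd i φ x) * η x) := by
          apply setIntegral_congr_fun hΩm
          intro x hx
          dsimp only
          rw [hdiv x hx, Finset.sum_neg_distrib, ← Finset.sum_mul]
          ring
      _ = (∑ i, ∫ x in Ω, -(pd i (F i) x * η x))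
            - ∫ x in Ω, (∑ i, bhat A b x i * pd i φ x) * η x := by
          have hneg : ∀ i : Fin n, IntegrableOn (fun x => -(pd i (F i) x * η x)) Ω :=
            fun i => (hI3a i).neg
          rw [integral_sub (integrable_finset_sum _ (fun i _ => hneg i)) hI3c,
            integral_finset_sum _ (fun i _ => hneg i)]
      _ = (∑ i, ∫ x in Ω, F i x * pd i η x)
            - ∫ x in Ω, (∑ i, bhat A b x i * pd i φ x) * η x := by
          congr 1
          refine Finset.sum_congr rfl fun i _ => ?_
          rw [integral_neg, hibp i, neg_neg]
      _ = ∫ x in Ω, ((∑ i, F i x * pd i η x)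
            - (∑ i, bhat A b x i * pd i φ x) * η x) := by
          rw [integral_sub (integrable_finset_sum _ (fun i _ => hI3b i)) hI3c,
            integral_finset_sum _ (fun i _ => hI3b i)]
  -- conclusion
  calc ∫ x in Ω, deriv f (u x) * ξ x ^ 2
      ≤ ∫ x in Ω, (-(Lop A b φ x)) * η x := setIntegral_mono_on hI1 hI2 hΩm key1
    _ = ∫ x in Ω, ((∑ i, F i x * pd i η x) - (∑ i, bhat A b x i * pd i φ x) * η x) := key2
    _ ≤ ∫ x in Ω, wsq (A x)
        (fun i => pd i ξ x - 1 / 2 * ξ x * invMulVec (A x) (bhat A b x) i) :=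
      setIntegral_mono_on hI3 hI4 hΩm key3
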